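/- For any subset $S$ of $\mathbb{R}^n$, the conic hull of $S$ is convex and closed under nonnegative scalar multiplication, and if $S$ is finite then the conic hull of $S$ is equal to the intersection of all closed half-spaces $\{x : \langle a, x\rangle \ge 0\}$ containing $S$ (Farkas/Weyl–Minkowski duality: a finitely generated cone is polyhedral, i.e. $\mathrm{cone}(S) = (\mathrm{cone}(S)^\vee)^\vee$). -/

import Mathlib

open Finset

/-- The conic hull `cone(S) = {∑ λ_i s_i : λ_i ≥ 0, s_i ∈ S}` of `S ⊆ ℝ^n`. -/
def coneHull {n : ℕ} (S : Set (Fin n → ℝ)) : Set (Fin n → ℝ) :=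
  {x | ∃ (m : ℕ) (c : Fin m → ℝ) (v : Fin m → (Fin n → ℝ)),
    (∀ i, 0 ≤ c i) ∧ (∀ i, v i ∈ S) ∧ x = ∑ i, c i • v i}

lemma coneHull_eq_span {n : ℕ} (S : Set (Fin n → ℝ)) :
    coneHull S = (Submodule.span {c : ℝ // 0 ≤ c} S : Set (Fin n → ℝ)) := by
  ext x
  simp only [coneHull, Set.mem_setOf_eq, SetLike.mem_coe, Submodule.mem_span_set']
  constructor
  · rintro ⟨m, c, v, hc, hv, rfl⟩
    exact ⟨m, fun i => ⟨c i, hc i⟩, fun i => ⟨v i, hv i⟩, rfl⟩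
  · rintro ⟨m, f, g, rfl⟩
    exact ⟨m, fun i => (f i : ℝ), fun i => (g i : Fin n → ℝ), fun i => (f i).2,
      fun i => (g i).2, rfl⟩

lemma isClosed_li {n : ℕ} {ι : Type*} [Fintype ι] (v : ι → (Fin n → ℝ))
    (hv : LinearIndependent ℝ v) :
    IsClosed {x : Fin n → ℝ | ∃ c : ι → ℝ, (∀ i, 0 ≤ c i) ∧ x = ∑ i, c i • v i} := by
  let L : (ι → ℝ) →ₗ[ℝ] (Fin n → ℝ) :=
    { toFun := fun c => ∑ i, c i • v i
      map_add' := by intro a b; simp [add_smul, Finset.sum_add_distrib]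
      map_smul' := by intro r a; simp [smul_smul, Finset.smul_sum] }
  have hinj : Function.Injective L := by
    intro a b hab
    have h0 : L (a - b) = 0 := by rw [map_sub, hab, sub_self]
    have := Fintype.linearIndependent_iff.mp hv (a - b) (by
      simpa [L, sub_smul, Finset.sum_sub_distrib] using h0)
    funext i
    have := this i
    simp only [Pi.sub_apply] at this
    linarith
  have hemb := LinearMap.isClosedEmbedding_of_injective
    (LinearMap.ker_eq_bot.mpr hinj)
  have hset : {x : Fin n → ℝ | ∃ c : ι → ℝ, (∀ i, 0 ≤ c i) ∧ x = ∑ i, c i • v i}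
      = L '' {c : ι → ℝ | ∀ i, 0 ≤ c i} := by
    ext x
    constructor
    · rintro ⟨c, hc, rfl⟩; exact ⟨c, hc, rfl⟩
    · rintro ⟨c, hc, rfl⟩; exact ⟨c, hc, rfl⟩
  rw [hset]
  refine hemb.isClosedMap _ ?_
  have : {c : ι → ℝ | ∀ i, 0 ≤ c i} = ⋂ i, {c : ι → ℝ | 0 ≤ c i} := by
    ext c; simp
  rw [this]
  exact isClosed_iInter fun i => isClosed_le continuous_const (continuous_apply i)

lemma carath_step {n m : ℕ} (v : Fin m → (Fin n → ℝ)) (t : Finset (Fin m))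
    (ih : ∀ t' ⊂ t, ∀ c : Fin m → ℝ, (∀ i, 0 ≤ c i) →
      ∃ (u : Finset (Fin m)) (d : Fin m → ℝ), u ⊆ t' ∧ (∀ i, 0 ≤ d i) ∧
        LinearIndependent ℝ (fun i : u => v i) ∧
        ∑ i ∈ t', c i • v i = ∑ i ∈ u, d i • v i)
    (c : Fin m → ℝ) (hc : ∀ i, 0 ≤ c i)
    (g : Fin m → ℝ) (hgsum : ∑ i ∈ t, g i • v i = 0)
    (i₁ : Fin m) (hi₁t : i₁ ∈ t) (hpos : 0 < g i₁) :
    ∃ (u : Finset (Fin m)) (d : Fin m → ℝ), u ⊆ t ∧ (∀ i, 0 ≤ d i) ∧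
      LinearIndependent ℝ (fun i : u => v i) ∧
      ∑ i ∈ t, c i • v i = ∑ i ∈ u, d i • v i := by
  set T := t.filter (fun i => 0 < g i) with hT
  have hne : T.Nonempty := ⟨i₁, by simp [hT, hi₁t, hpos]⟩
  obtain ⟨i₀, hi₀T, hmin⟩ := T.exists_min_image (fun i => c i / g i) hne
  have hi₀t : i₀ ∈ t := (Finset.mem_filter.mp hi₀T).1
  have hgi₀ : 0 < g i₀ := (Finset.mem_filter.mp hi₀T).2
  set r := c i₀ / g i₀ with hr
  have hr0 : 0 ≤ r := div_nonneg (hc i₀) hgi₀.le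
  set c' : Fin m → ℝ := fun i => if i ∈ t then c i - r * g i else 0 with hc'
  have hc'0 : ∀ i, 0 ≤ c' i := by
    intro i
    simp only [hc']
    split_ifs with hit
    · rcases le_or_gt (g i) 0 with hg | hg
      · nlinarith [hc i]
      · have hiT : i ∈ T := Finset.mem_filter.mpr ⟨hit, hg⟩
        have := hmin i hiT
        rw [div_le_div_iff₀ hgi₀ hg] at this
        have : r * g i ≤ c i := by
          rw [hr, div_mul_eq_mul_div, div_le_iff₀ hgi₀]
          nlinarith
        linarith
    · exact le_refl 0
  have hc'i₀ : c' i₀ = 0 := by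
    simp only [hc', if_pos hi₀t, hr]
    field_simp
    ring
  have hsum : ∑ i ∈ t, c i • v i = ∑ i ∈ t, c' i • v i := by
    have : ∑ i ∈ t, c' i • v i = ∑ i ∈ t, (c i • v i - r • (g i • v i)) := by
      refine Finset.sum_congr rfl fun i hi => ?_
      simp only [hc', if_pos hi, sub_smul, smul_smul]
    rw [this, Finset.sum_sub_distrib, ← Finset.smul_sum, hgsum, smul_zero, sub_zero]
  have herase : ∑ i ∈ t, c' i • v i = ∑ i ∈ t.erase i₀, c' i • v i := by
    rw [Finset.sum_erase _ (by rw [hc'i₀, zero_smul])]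
  obtain ⟨u, d, hu, hd, hli, heq⟩ :=
    ih (t.erase i₀) (Finset.erase_ssubset hi₀t) c' hc'0
  exact ⟨u, d, hu.trans (Finset.erase_subset _ _), hd, hli, by
    rw [hsum, herase, heq]⟩

lemma carath {n m : ℕ} (v : Fin m → (Fin n → ℝ)) (t : Finset (Fin m)) :
    ∀ c : Fin m → ℝ, (∀ i, 0 ≤ c i) →
    ∃ (u : Finset (Fin m)) (d : Fin m → ℝ), u ⊆ t ∧ (∀ i, 0 ≤ d i) ∧
      LinearIndependent ℝ (fun i : u => v i) ∧
      ∑ i ∈ t, c i • v i = ∑ i ∈ u, d i • v i := by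
  induction t using Finset.strongInduction with
  | _ t ih =>
    intro c hc
    by_cases hli : LinearIndependent ℝ (fun i : t => v i)
    · exact ⟨t, c, subset_rfl, hc, hli, rfl⟩
    · obtain ⟨g, hgsum, j₀, hj₀⟩ := Fintype.not_linearIndependent_iff.mp hli
      set g' : Fin m → ℝ := fun i => if h : i ∈ t then g ⟨i, h⟩ else 0 with hg'
      have hg'sum : ∑ i ∈ t, g' i • v i = 0 := by
        rw [← Finset.sum_coe_sort t (fun i => g' i • v i)]
        rw [← hgsum]
        exact Finset.sum_congr rfl fun i _ => by simp [hg', i.2]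
      have hg'j₀ : g' (j₀ : Fin m) ≠ 0 := by simpa [hg', j₀.2] using hj₀
      rcases lt_or_gt_of_ne hg'j₀ with hneg | hpos
      · have hg'sum' : ∑ i ∈ t, (-g') i • v i = 0 := by
          simp only [Pi.neg_apply, neg_smul, Finset.sum_neg_distrib, hg'sum, neg_zero]
        exact carath_step v t (fun t' ht' => ih t' ht') c hc (-g') hg'sum' j₀ j₀.2
          (by simp only [Pi.neg_apply]; linarith)
      · exact carath_step v t (fun t' ht' => ih t' ht') c hc g' hg'sum j₀ j₀.2 hpos

lemma isClosed_coneHull {n : ℕ} (S : Set (Fin n → ℝ)) (hS : S.Finite) :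
    IsClosed (coneHull S) := by
  lift S to Finset (Fin n → ℝ) using hS with s
  set m := s.card with hm
  set e := s.equivFin with he
  set v : Fin m → (Fin n → ℝ) := fun i => (e.symm i : Fin n → ℝ) with hv
  have hvS : ∀ i, v i ∈ (s : Set (Fin n → ℝ)) := fun i => (e.symm i).2
  have hrange : ∀ x ∈ (s : Set (Fin n → ℝ)), ∃ i, v i = x := by
    intro x hx
    exact ⟨e ⟨x, hx⟩, by simp [hv]⟩
  have key : coneHull (s : Set (Fin n → ℝ)) =
      ⋃ t ∈ {t : Finset (Fin m) | LinearIndependent ℝ (fun i : t => v i)},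
        {x | ∃ c : Fin m → ℝ, (∀ i, 0 ≤ c i) ∧ x = ∑ i ∈ t, c i • v i} := by
    ext x
    simp only [Set.mem_iUnion, Set.mem_setOf_eq]
    constructor
    · rintro ⟨k, c, w, hc, hw, rfl⟩
      choose idx hidx using fun j => hrange (w j) (hw j)
      set c' : Fin m → ℝ := fun i => ∑ j ∈ univ.filter (fun j => idx j = i), c j with hc'
      have hre : ∑ j, c j • w j = ∑ i ∈ univ, c' i • v i := by
        rw [← Finset.sum_fiberwise_of_maps_to (fun j _ => Finset.mem_univ (idx j))
          (fun j => c j • w j)]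
        refine Finset.sum_congr rfl fun i _ => ?_
        rw [hc', Finset.sum_smul]
        refine Finset.sum_congr rfl fun j hj => ?_
        rw [Finset.mem_filter] at hj
        rw [← hidx j, hj.2]
      obtain ⟨u, d, _, hd, hli, heq⟩ := carath v univ c'
        (fun i => Finset.sum_nonneg fun j _ => hc j)
      exact ⟨u, hli, d, hd, by rw [hre, heq]⟩
    · rintro ⟨t, hli, c, hc, rfl⟩
      rw [coneHull_eq_span]
      exact Submodule.sum_mem _ fun i _ =>
        Submodule.smul_mem _ (⟨c i, hc i⟩ : {c : ℝ // 0 ≤ c}) (Submodule.subset_span (hvS i))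
  rw [key]
  refine Set.Finite.isClosed_biUnion (Set.toFinite _) fun t ht => ?_
  have hset : {x : Fin n → ℝ | ∃ c : Fin m → ℝ, (∀ i, 0 ≤ c i) ∧ x = ∑ i ∈ t, c i • v i}
      = {x : Fin n → ℝ | ∃ c : ↥t → ℝ, (∀ i, 0 ≤ c i) ∧ x = ∑ i : ↥t, c i • v i} := by
    ext x
    constructor
    · rintro ⟨c, hc, rfl⟩
      exact ⟨fun i => c i, fun i => hc i,
        by rw [← Finset.sum_coe_sort t (fun i => c i • v i)]⟩
    · rintro ⟨c, hc, rfl⟩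
      refine ⟨fun i => if h : i ∈ t then c ⟨i, h⟩ else 0,
        fun i => by dsimp; split_ifs with h; exacts [hc ⟨i, h⟩, le_refl 0], ?_⟩
      rw [← Finset.sum_coe_sort t]
      exact Finset.sum_congr rfl fun i _ => by simp [i.2]
  rw [hset]
  exact isClosed_li _ ht

lemma coneHull_smul_mem {n : ℕ} (S : Set (Fin n → ℝ)) :
    ∀ x ∈ coneHull S, ∀ t : ℝ, 0 ≤ t → t • x ∈ coneHull S := by
  intro x hx t ht
  rw [coneHull_eq_span] at hx ⊢
  exact Submodule.smul_mem _ (⟨t, ht⟩ : {c : ℝ // 0 ≤ c}) hx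

lemma coneHull_self_subset {n : ℕ} (S : Set (Fin n → ℝ)) : S ⊆ coneHull S := by
  intro x hx
  exact ⟨1, fun _ => 1, fun _ => x, fun _ => zero_le_one, fun _ => hx, by simp⟩

open scoped RealInnerProductSpace in
/-- The conic hull of any `S ⊆ ℝ^n` is convex and closed under nonnegative
scalar multiplication, and (Farkas/Weyl–Minkowski duality) if `S` is finite
then `cone(S)` equals the intersection of all closed half-spaces
`{x : ⟨a, x⟩ ≥ 0}` containing `S`, i.e. `cone(S) = (cone(S)^∨)^∨`. -/
theorem stmt10 {n : ℕ} (S : Set (Fin n → ℝ)) :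
    Convex ℝ (coneHull S) ∧
    (∀ x ∈ coneHull S, ∀ t : ℝ, 0 ≤ t → t • x ∈ coneHull S) ∧
    (S.Finite → coneHull S =
      {x | ∀ a : Fin n → ℝ, (∀ s ∈ S, 0 ≤ ∑ i, a i * s i) → 0 ≤ ∑ i, a i * x i}) := by
  refine ⟨?_, coneHull_smul_mem S, ?_⟩
  · intro x hx y hy a b ha hb _
    rw [coneHull_eq_span] at hx hy ⊢
    exact Submodule.add_mem _
      (Submodule.smul_mem _ (⟨a, ha⟩ : {c : ℝ // 0 ≤ c}) hx)
      (Submodule.smul_mem _ (⟨b, hb⟩ : {c : ℝ // 0 ≤ c}) hy)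
  · intro hS
    ext x
    simp only [Set.mem_setOf_eq]
    constructor
    · rintro ⟨m, c, v, hc, hv, rfl⟩ a ha
      have hcalc : ∑ i, a i * (∑ j, c j • v j) i = ∑ j, c j * ∑ i, a i * v j i := by
        simp only [Finset.sum_apply, Pi.smul_apply, smul_eq_mul, Finset.mul_sum]
        rw [Finset.sum_comm]
        exact Finset.sum_congr rfl fun j _ =>
          Finset.sum_congr rfl fun i _ => by ring

      rw [hcalc]
      exact Finset.sum_nonneg fun j _ => mul_nonneg (hc j) (ha (v j) (hv j))
    · intro hx
      by_contra hxC
      -- separation in Euclidean space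
      let K : ProperCone ℝ (EuclideanSpace ℝ (Fin n)) :=
        { carrier := WithLp.ofLp ⁻¹' coneHull S
          zero_mem' := ⟨0, fun i => 0, fun i => i.elim0, fun i => i.elim0, fun i => i.elim0, by simp⟩
          isClosed' := (isClosed_coneHull S hS).preimage (PiLp.continuous_ofLp 2 _)
          smul_mem' := fun c {y} hy => by
            rw [Set.mem_preimage, WithLp.ofLp_smul]
            exact coneHull_smul_mem S _ hy (c : ℝ) c.2
          add_mem' := fun {y z} hy hz => by
            show WithLp.ofLp y + WithLp.ofLp z ∈ coneHull S
            rw [coneHull_eq_span] at hy hz ⊢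
            exact Submodule.add_mem _ hy hz }
      have hne : (K : Set (EuclideanSpace ℝ (Fin n))).Nonempty :=
        ⟨0, K.zero_mem⟩
      have hcl : IsClosed (K : Set (EuclideanSpace ℝ (Fin n))) := K.isClosed
      obtain ⟨y, hy1, hy2⟩ :=
        K.hyperplane_separation' (x₀ := WithLp.toLp 2 x) hxC
      have hay : ∀ s ∈ S, 0 ≤ ∑ i, y i * s i := by
        intro s hs
        have := hy1 (WithLp.toLp 2 s) (coneHull_self_subset S hs)
        rw [PiLp.inner_apply] at this
        simpa [mul_comm] using this
      have := hx (WithLp.ofLp y) hay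
      rw [PiLp.inner_apply] at hy2
      simp only [RCLike.inner_apply, conj_trivial] at hy2
      linarith [hy2, this]
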